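/- Let P be a field, G a simple group, and V a two-sided ideal of the group algebra MonoidAlgebra P G with V ≠ ⊤. Then either V equals the augmentation ideal (that is, an element a ∈ MonoidAlgebra P G lies in V if and only if the sum of its coefficients is 0), or V is faithful: for every g ∈ G, if (of g) - 1 ∈ V then g = 1. -/

import Mathlib

/-- For a simple group `G`, every proper two-sided ideal of the group algebra
`MonoidAlgebra P G` is either the augmentation ideal or faithful. -/
theorem twoSidedIdeal_group_algebra_augmentation_or_faithful
    (P : Type) [Field P] (G : Type) [Group G] [IsSimpleGroup G]
    (V : TwoSidedIdeal (MonoidAlgebra P G)) (hV : V ≠ ⊤) :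
    (∀ a : MonoidAlgebra P G, a ∈ V ↔ Finsupp.sum a.coeff (fun _ c => c) = 0) ∨
    (∀ g : G, (MonoidAlgebra.of P G g) - 1 ∈ V → g = 1) := by
  classical
  set of := MonoidAlgebra.of P G with hof
  have hmul : ∀ {g h : G}, of g - 1 ∈ V → of h - 1 ∈ V → of (g * h) - 1 ∈ V := by
    intro g h hg hh
    have : of (g * h) - 1 = (of g - 1) * (of h - 1) + (of g - 1) + (of h - 1) := by
      rw [map_mul]; noncomm_ring
    rw [this]
    exact V.add_mem (V.add_mem (V.mul_mem_right _ _ hg) hg) hh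
  have hinv : ∀ {g : G}, of g - 1 ∈ V → of g⁻¹ - 1 ∈ V := by
    intro g hg
    have : of g⁻¹ - 1 = -(of g⁻¹ * (of g - 1)) := by
      rw [mul_sub, ← map_mul, inv_mul_cancel]; simp
    rw [this]
    exact V.neg_mem (V.mul_mem_left _ _ hg)
  let N : Subgroup G :=
    { carrier := {g | of g - 1 ∈ V}
      one_mem' := by simp [V.zero_mem]
      mul_mem' := fun ha hb => hmul ha hb
      inv_mem' := fun ha => hinv ha }
  have hN : N.Normal := by
    constructor
    intro n hn g
    have : of (g * n * g⁻¹) - 1 = of g * (of n - 1) * of g⁻¹ := by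
      simp only [map_mul, mul_sub, sub_mul, mul_one, one_mul, ← map_mul]
      simp
    show of (g * n * g⁻¹) - 1 ∈ V
    rw [this]
    exact V.mul_mem_right _ _ (V.mul_mem_left _ _ hn)
  rcases hN.eq_bot_or_eq_top with hb | ht
  · right
    intro g hg
    have : g ∈ N := hg
    rw [hb] at this
    exact this
  · left
    have hall : ∀ g : G, of g - 1 ∈ V := fun g => by
      have : g ∈ N := ht ▸ Subgroup.mem_top g
      exact this
    -- augmentation map
    let ε : MonoidAlgebra P G →ₐ[P] P := MonoidAlgebra.lift P P G 1
    have hε : ∀ x : MonoidAlgebra P G, ε x = Finsupp.sum x.coeff (fun _ c => c) := by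
      intro x
      simp [ε, MonoidAlgebra.lift_apply]
    have hbackward : ∀ a : MonoidAlgebra P G, ε a = 0 → a ∈ V := by
      intro a ha
      have key : a = Finsupp.sum a.coeff (fun g c => c • (of g - 1)) := by
        have h1 : Finsupp.sum a.coeff (fun g c => c • (of g - 1))
            = Finsupp.sum a.coeff (fun g c => c • of g)
              - Finsupp.sum a.coeff (fun g c => c • (1 : MonoidAlgebra P G)) := by
          simp [smul_sub, Finsupp.sum_sub]
        have h2 : Finsupp.sum a.coeff (fun g c => c • of g) = a := by
          conv_rhs => rw [← a.sum_single]
          refine Finsupp.sum_congr fun g _ => ?_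
          simp [hof, MonoidAlgebra.of_apply, MonoidAlgebra.smul_single']
        have h3 : Finsupp.sum a.coeff (fun g c => c • (1 : MonoidAlgebra P G)) = 0 := by
          rw [hε] at ha
          show ∑ g ∈ a.coeff.support, a.coeff g • (1 : MonoidAlgebra P G) = 0
          rw [← Finset.sum_smul]
          have hz : ∑ g ∈ a.coeff.support, a.coeff g = 0 := ha
          rw [hz, zero_smul]
        rw [h1, h2, h3, sub_zero]
      rw [key]
      refine TwoSidedIdeal.mem_asIdeal.mp ?_
      refine Submodule.sum_mem _ fun g _ => ?_
      show a.coeff g • (of g - 1) ∈ TwoSidedIdeal.asIdeal V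
      rw [Algebra.smul_def]
      exact TwoSidedIdeal.mem_asIdeal.mpr (V.mul_mem_left _ _ (hall g))
    intro a
    rw [← hε]
    constructor
    · intro haV
      by_contra hne
      have h2 : a - algebraMap P (MonoidAlgebra P G) (ε a) ∈ V := by
        refine hbackward _ ?_
        simp [map_sub, ε, MonoidAlgebra.lift_single]
      have h3 : algebraMap P (MonoidAlgebra P G) (ε a) ∈ V := by
        have := V.sub_mem haV h2
        simpa using this
      have h4 : (1 : MonoidAlgebra P G) ∈ V := by
        have := V.mul_mem_left (algebraMap P (MonoidAlgebra P G) (ε a)⁻¹) _ h3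
        rwa [← map_mul, inv_mul_cancel₀ hne, map_one] at this
      exact hV (V.eq_top h4)
    · exact hbackward a
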